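/- Let A and B be k \times k Hermitian matrices with empirical spectral distribution functions F_A and F_B, where F_A(x) = (number of eigenvalues of A that are \le x)/k. Then \sup_x |F_A(x) - F_B(x)| \le rank(A - B)/k. -/

import Mathlib

open Finset

section helpers
local notation "⟪" x ", " y "⟫" => @inner ℂ _ _ x y

lemma toE_eigen {k : ℕ} (A : Matrix (Fin k) (Fin k) ℂ) (hA : A.IsHermitian) (j : Fin k) :
    Matrix.toEuclideanLin A (hA.eigenvectorBasis j) =
      (hA.eigenvalues j : ℂ) • hA.eigenvectorBasis j := by
  have h := hA.mulVec_eigenvectorBasis j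
  ext i
  rw [Matrix.toEuclideanLin_apply]
  simp only [PiLp.toLp_apply]
  simpa using congrFun h i

lemma quad_eq {k : ℕ} (A : Matrix (Fin k) (Fin k) ℂ) (hA : A.IsHermitian)
    {ι : Type*} [Fintype ι] (f : ι → Fin k) (hf : Function.Injective f) (c : ι → ℂ) :
    ⟪∑ i, c i • hA.eigenvectorBasis (f i),
      Matrix.toEuclideanLin A (∑ i, c i • hA.eigenvectorBasis (f i))⟫ =
      ∑ i, (hA.eigenvalues (f i) : ℂ) * (‖c i‖ : ℂ) ^ 2 := by
  have hON : Orthonormal ℂ (fun i => hA.eigenvectorBasis (f i)) :=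
    hA.eigenvectorBasis.orthonormal.comp f hf
  have hT : Matrix.toEuclideanLin A (∑ i, c i • hA.eigenvectorBasis (f i)) =
      ∑ i, ((hA.eigenvalues (f i) : ℂ) * c i) • hA.eigenvectorBasis (f i) := by
    rw [map_sum]
    refine Finset.sum_congr rfl fun i _ => ?_
    rw [map_smul, toE_eigen, smul_smul, mul_comm]
  rw [hT, hON.inner_sum]
  refine Finset.sum_congr rfl fun i _ => ?_
  rw [show (starRingEnd ℂ) (c i) * ((hA.eigenvalues (f i) : ℂ) * c i)
      = (hA.eigenvalues (f i) : ℂ) * ((starRingEnd ℂ) (c i) * c i) by ring, RCLike.conj_mul]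
  rfl

lemma norm_sq_eq {k : ℕ} (b : OrthonormalBasis (Fin k) ℂ (EuclideanSpace ℂ (Fin k)))
    {ι : Type*} [Fintype ι] (f : ι → Fin k) (hf : Function.Injective f) (c : ι → ℂ) :
    ‖∑ i, c i • b (f i)‖ ^ 2 = ∑ i, ‖c i‖ ^ 2 := by
  have hON : Orthonormal ℂ (fun i => b (f i)) := b.orthonormal.comp f hf
  have h := hON.inner_sum c c univ
  rw [inner_self_eq_norm_sq_to_K] at h
  have h2 : ∀ i : ι, (starRingEnd ℂ) (c i) * c i = ((‖c i‖ ^ 2 : ℝ) : ℂ) := by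
    intro i; rw [RCLike.conj_mul]; norm_num
  simp only [h2, ← Complex.ofReal_sum] at h
  simp only [← RCLike.ofReal_pow] at h
  exact RCLike.ofReal_inj.mp h

lemma key_count {k : ℕ} (A B : Matrix (Fin k) (Fin k) ℂ)
    (hA : A.IsHermitian) (hB : B.IsHermitian) (x : ℝ) :
    (univ.filter (fun i => hA.eigenvalues i ≤ x)).card ≤
      (univ.filter (fun i => hB.eigenvalues i ≤ x)).card + (A - B).rank := by
  classical
  set sA : Finset (Fin k) := univ.filter (fun i => hA.eigenvalues i ≤ x) with hsA
  set sB : Finset (Fin k) := univ.filter (fun i => hB.eigenvalues i ≤ x) with hsB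
  set tB : Finset (Fin k) := univ.filter (fun i => ¬ hB.eigenvalues i ≤ x) with htB
  set V : Submodule ℂ (EuclideanSpace ℂ (Fin k)) :=
    Submodule.span ℂ (Set.range (⇑hA.eigenvectorBasis ∘ (Subtype.val : {i // i ∈ sA} → Fin k))) with hV
  set W : Submodule ℂ (EuclideanSpace ℂ (Fin k)) :=
    Submodule.span ℂ (Set.range (⇑hB.eigenvectorBasis ∘ (Subtype.val : {i // i ∈ tB} → Fin k))) with hW
  set K : Submodule ℂ (EuclideanSpace ℂ (Fin k)) :=
    LinearMap.ker (Matrix.toEuclideanLin (A - B)) with hK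
  have hdV : Module.finrank ℂ V = sA.card := by
    rw [hV, finrank_span_eq_card
      ((hA.eigenvectorBasis.orthonormal.comp _ Subtype.val_injective).linearIndependent)]
    exact Fintype.card_coe _
  have hdW : Module.finrank ℂ W = tB.card := by
    rw [hW, finrank_span_eq_card
      ((hB.eigenvectorBasis.orthonormal.comp _ Subtype.val_injective).linearIndependent)]
    exact Fintype.card_coe _
  have hdK : Module.finrank ℂ K + (A - B).rank = k := by
    rw [hK]
    have h1 := LinearMap.finrank_range_add_finrank_ker (Matrix.toEuclideanLin (A - B))
    have h2 : (A - B).rank =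
        Module.finrank ℂ (LinearMap.range (Matrix.toEuclideanLin (A - B))) := by
      rw [Matrix.toEuclideanLin_eq_toLin]
      exact Matrix.rank_eq_finrank_range_toLin _ _ _
    rw [← h2, finrank_euclideanSpace_fin] at h1
    omega
  -- trivial intersection
  have hbot : V ⊓ W ⊓ K = ⊥ := by
    rw [eq_bot_iff]
    rintro v ⟨⟨hvV, hvW⟩, hvK⟩
    rw [Submodule.mem_bot]
    by_contra h0
    obtain ⟨c, hc⟩ := (Submodule.mem_span_range_iff_exists_fun ℂ).mp hvV
    simp only [Function.comp_apply] at hc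
    obtain ⟨d, hd⟩ := (Submodule.mem_span_range_iff_exists_fun ℂ).mp hvW
    simp only [Function.comp_apply] at hd
    have hdne : ∃ j : tB, d j ≠ 0 := by
      by_contra hall
      push_neg at hall
      apply h0
      rw [← hd]
      simp [hall]
    -- A and B act the same on v
    have hABv : Matrix.toEuclideanLin A v = Matrix.toEuclideanLin B v := by
      have : Matrix.toEuclideanLin (A - B) v = 0 := hvK
      rw [map_sub] at this
      exact sub_eq_zero.mp this
    -- quadratic form bounds
    have hle : (⟪v, Matrix.toEuclideanLin A v⟫).re ≤ x * ‖v‖ ^ 2 := by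
      have hq := quad_eq A hA (Subtype.val : {i // i ∈ sA} → Fin k) Subtype.val_injective c
      have hn := norm_sq_eq hA.eigenvectorBasis (Subtype.val : {i // i ∈ sA} → Fin k)
        Subtype.val_injective c
      rw [← hc, hq, hn]
      rw [Complex.re_sum]
      rw [Finset.mul_sum]
      refine Finset.sum_le_sum fun i _ => ?_
      have hi : hA.eigenvalues i ≤ x := (Finset.mem_filter.mp i.2).2
      have : ((hA.eigenvalues (i : Fin k) : ℂ) * (‖c i‖ : ℂ) ^ 2).re
          = hA.eigenvalues (i : Fin k) * ‖c i‖ ^ 2 := by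
        simp [← Complex.ofReal_pow, ← Complex.ofReal_mul]
      rw [this]
      have := sq_nonneg ‖c i‖
      nlinarith
    have hgt : x * ‖v‖ ^ 2 < (⟪v, Matrix.toEuclideanLin B v⟫).re := by
      have hq := quad_eq B hB (Subtype.val : {i // i ∈ tB} → Fin k) Subtype.val_injective d
      have hn := norm_sq_eq hB.eigenvectorBasis (Subtype.val : {i // i ∈ tB} → Fin k)
        Subtype.val_injective d
      rw [← hd, hq, hn]
      rw [Complex.re_sum, Finset.mul_sum]
      obtain ⟨j, hj⟩ := hdne
      refine Finset.sum_lt_sum (fun i _ => ?_) ⟨j, Finset.mem_univ j, ?_⟩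
      · have hi : x < hB.eigenvalues i := lt_of_not_ge (Finset.mem_filter.mp i.2).2
        have : ((hB.eigenvalues (i : Fin k) : ℂ) * (‖d i‖ : ℂ) ^ 2).re
            = hB.eigenvalues (i : Fin k) * ‖d i‖ ^ 2 := by
          simp [← Complex.ofReal_pow, ← Complex.ofReal_mul]
        rw [this]
        nlinarith [sq_nonneg ‖d i‖]
      · have hi : x < hB.eigenvalues j := lt_of_not_ge (Finset.mem_filter.mp j.2).2
        have : ((hB.eigenvalues (j : Fin k) : ℂ) * (‖d j‖ : ℂ) ^ 2).re
            = hB.eigenvalues (j : Fin k) * ‖d j‖ ^ 2 := by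
          simp [← Complex.ofReal_pow, ← Complex.ofReal_mul]
        rw [this]
        have hdj : 0 < ‖d j‖ ^ 2 := pow_pos (norm_pos_iff.mpr hj) 2
        nlinarith
    rw [hABv] at hle
    linarith
  -- dimension chase
  have hsup1 : Module.finrank ℂ ↥(V ⊔ W) ≤ k := by
    simpa [finrank_euclideanSpace_fin] using Submodule.finrank_le (V ⊔ W)
  have hsup2 : Module.finrank ℂ ↥((V ⊓ W) ⊔ K) ≤ k := by
    simpa [finrank_euclideanSpace_fin] using Submodule.finrank_le ((V ⊓ W) ⊔ K)
  have e1 := Submodule.finrank_sup_add_finrank_inf_eq V W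
  have e2 := Submodule.finrank_sup_add_finrank_inf_eq (V ⊓ W) K
  rw [hbot] at e2
  simp only [finrank_bot] at e2
  have hcard : sB.card + tB.card = k := by
    have := Finset.card_filter_add_card_filter_not
      (s := (univ : Finset (Fin k))) (p := fun i => hB.eigenvalues i ≤ x)
    simpa [hsB, htB] using this
  omega

end helpers

lemma my_rank_neg {k : ℕ} (M : Matrix (Fin k) (Fin k) ℂ) : (-M).rank = M.rank := by
  have h : (-M).mulVecLin = -(M.mulVecLin) := by
    ext v i
    simp [Matrix.neg_mulVec]
  rw [Matrix.rank, Matrix.rank, h, LinearMap.range_neg]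

theorem stmt_8 (k : ℕ) (hk : 0 < k) (A B : Matrix (Fin k) (Fin k) ℂ)
    (hA : A.IsHermitian) (hB : B.IsHermitian) (x : ℝ) :
    |((univ.filter (fun i => hA.eigenvalues i ≤ x)).card : ℝ) / k -
        ((univ.filter (fun i => hB.eigenvalues i ≤ x)).card : ℝ) / k| ≤
      ((A - B).rank : ℝ) / k := by
  have h1 := key_count A B hA hB x
  have h2 := key_count B A hB hA x
  have hr : (B - A).rank = (A - B).rank := by
    rw [show B - A = -(A - B) from (neg_sub A B).symm, my_rank_neg]
  rw [hr] at h2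
  have hk' : (0 : ℝ) < k := by exact_mod_cast hk
  have key : |((univ.filter (fun i => hA.eigenvalues i ≤ x)).card : ℝ) -
      ((univ.filter (fun i => hB.eigenvalues i ≤ x)).card : ℝ)| ≤ ((A - B).rank : ℝ) := by
    have h1' : ((univ.filter (fun i => hA.eigenvalues i ≤ x)).card : ℝ) ≤
        ((univ.filter (fun i => hB.eigenvalues i ≤ x)).card : ℝ) + ((A - B).rank : ℝ) := by
      exact_mod_cast h1
    have h2' : ((univ.filter (fun i => hB.eigenvalues i ≤ x)).card : ℝ) ≤
        ((univ.filter (fun i => hA.eigenvalues i ≤ x)).card : ℝ) + ((A - B).rank : ℝ) := by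
      exact_mod_cast h2
    rw [abs_sub_le_iff]
    constructor <;> linarith
  rw [div_sub_div_same, abs_div, abs_of_pos hk']
  gcongr
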